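/- With s(d,m) ∈ ℤ[q] the generating polynomial of basal billiard partitions with d parts and largest part m: s(d, 2n+1) = 0 unless n+1 ≤ d ≤ 2n, and for n+1 ≤ d ≤ 2n the following identity holds in ℤ[q]: s(d, 2n+1) · ∏_{i=1}^{2n−d}(1 − q^{2i}) · ∏_{i=1}^{d−n−1}(1 − q^{2i}) = q^{2n² − 2dn + d² + 3n} · ∏_{i=1}^{n−1}(1 − q^{2i}). (Equivalently, s(d,2n+1) = q^{2n²−2dn+d²+3n} times the Gaussian binomial coefficient [n−1 choose 2n−d] in the variable q².) -/

import Mathlib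

/-- An Euclidean billiard partition, recorded as the strictly decreasing list
of its parts: a nonempty strictly decreasing list of positive integers whose
smallest (last) part is even and in which no two adjacent parts are both odd. -/
def IsEBP (l : List ℕ) : Prop :=
  l ≠ [] ∧ l.Chain' (fun a b => b < a) ∧ (∀ x ∈ l, 0 < x) ∧
    (∀ m ∈ l.getLast?, Even m) ∧ l.Chain' (fun a b => ¬(Odd a ∧ Odd b))

/-- A basal billiard partition: an Euclidean billiard partition whose smallest
part equals `2` and in which adjacent parts differ by at most `2`. -/
def IsBasal (l : List ℕ) : Prop :=
  IsEBP l ∧ l.getLast? = some 2 ∧ l.Chain' (fun a b => a - b ≤ 2)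

open Classical Polynomial in
/-- `s d m ∈ ℤ[q]` is the generating polynomial `∑_π q^{|π|}` of basal billiard
partitions `π` with exactly `d` parts and largest part `m` (such a partition has
all parts `≤ m`, hence is encoded as a function `Fin d → Fin (m+1)`, and each
basal billiard partition with `d` parts and largest part `m` occurs exactly once
in the sum below); in particular `s 0 m = 0`. -/
noncomputable def s (d m : ℕ) : Polynomial ℤ :=
  ∑ f : Fin d → Fin (m + 1),
    if IsBasal (List.ofFn fun i => (f i : ℕ)) ∧
        (List.ofFn fun i => (f i : ℕ)).head? = some m
    then X ^ (List.ofFn fun i => (f i : ℕ)).sum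
    else 0

def Cond (m : ℕ) (l : List ℕ) : Prop := IsBasal l ∧ l.head? = some m

instance : IsTrans ℕ (fun a b : ℕ => b < a) := ⟨fun _ _ _ h1 h2 => h2.trans h1⟩

lemma cond_bound {m : ℕ} {l : List ℕ} (h : Cond m l) : ∀ x ∈ l, x ≤ m := by
  obtain ⟨⟨⟨hne, hdec, _⟩, _⟩, hhead⟩ := h
  match l, hhead with
  | a :: t, hhead =>
    have ha : a = m := by simpa using hhead
    subst ha
    simp only [List.Chain', List.isChain_iff_pairwise, List.pairwise_cons] at hdec
    intro x hx
    rcases List.mem_cons.mp hx with rfl | hx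
    · exact le_rfl
    · exact (hdec.1 x hx).le

lemma mem_of_getLast?_eq {l : List ℕ} {x : ℕ} (h : l.getLast? = some x) : x ∈ l := by
  obtain ⟨h', rfl⟩ := List.mem_getLast?_eq_getLast (by simpa using h)
  exact List.getLast_mem h'

lemma not_cond_one {l : List ℕ} : ¬ Cond 1 l := by
  intro h
  have h2 : (2 : ℕ) ∈ l := mem_of_getLast?_eq h.1.2.1
  exact absurd (cond_bound h 2 h2) (by norm_num)

lemma cond_two {l : List ℕ} : Cond 2 l ↔ l = [2] := by
  constructor
  · rintro h
    obtain ⟨⟨⟨hne, hdec, hpos, _, _⟩, hlast, _⟩, hhead⟩ := h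
    match l, hhead with
    | a :: t, hhead =>
      have ha : a = 2 := by simpa using hhead
      subst ha
      match t, hlast with
      | [], _ => rfl
      | b :: r, hlast =>
        exfalso
        rw [List.getLast?_cons_cons] at hlast
        have h2 : (2 : ℕ) ∈ b :: r := mem_of_getLast?_eq hlast
        simp only [List.Chain', List.isChain_iff_pairwise, List.pairwise_cons] at hdec
        exact absurd (hdec.1 2 h2) (by norm_num)
  · rintro rfl
    refine ⟨⟨⟨by simp, List.isChain_singleton _, by simp, by simp, List.isChain_singleton _⟩, by simp, List.isChain_singleton _⟩, by simp⟩

lemma cond_cons {m : ℕ} (hm : 3 ≤ m) {l : List ℕ} :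
    Cond m l ↔ ∃ l', l = m :: l' ∧ (Cond (m - 1) l' ∨ Even m ∧ Cond (m - 2) l') := by
  constructor
  · rintro ⟨⟨⟨hne, hdec, hpos, hev, hodd⟩, hlast, hgap⟩, hhead⟩
    match l, hhead with
    | a :: t, hhead =>
      have ha : a = m := by simpa using hhead
      match t, hlast with
      | [], hlast =>
        exfalso
        simp only [List.getLast?_singleton, Option.some_inj] at hlast
        omega
      | b :: r, hlast =>
        rw [List.getLast?_cons_cons] at hlast
        simp only [List.Chain', List.isChain_cons_cons] at hdec hgap hodd
        obtain ⟨hd1, hdec⟩ := hdec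
        obtain ⟨hg1, hgap⟩ := hgap
        obtain ⟨ho1, hodd⟩ := hodd
        have hb : b = m - 1 ∨ b = m - 2 := by omega
        have hcond : Cond b (b :: r) := by
          refine ⟨⟨⟨by simp, hdec, fun x hx => hpos x (List.mem_cons_of_mem _ hx),
            fun x hx => ?_, hodd⟩, hlast, hgap⟩, by simp⟩
          rw [Option.mem_def, hlast, Option.some_inj] at hx
          exact hx ▸ even_two
        refine ⟨b :: r, by rw [ha], ?_⟩
        rcases hb with rfl | rfl
        · exact Or.inl hcond
        · rcases Nat.even_or_odd m with he | ho
          · exact Or.inr ⟨he, hcond⟩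
          · exfalso
            rw [Nat.odd_iff] at ho
            exact ho1 ⟨Nat.odd_iff.mpr (by omega), Nat.odd_iff.mpr (by omega)⟩
  · rintro ⟨l', rfl, h⟩
    have hkey : ∀ c : ℕ, c + 1 ≤ m → m - c ≤ 2 → ¬(Odd m ∧ Odd c) → Cond c l' →
        Cond m (m :: l') := by
      intro c hc1 hc2 hodd' hcc
      obtain ⟨⟨⟨hne, hdec, hpos, hev, hodd⟩, hlast, hgap⟩, hhead⟩ := hcc
      match l', hhead with
      | b :: r, hhead =>
        have hb : b = c := by simpa using hhead
        refine ⟨⟨⟨by simp, List.isChain_cons_cons.mpr ⟨by omega, hdec⟩, ?_,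
          fun x hx => by rw [List.getLast?_cons_cons] at hx; exact hev x hx,
          List.isChain_cons_cons.mpr ⟨by rw [hb]; exact hodd', hodd⟩⟩,
          by rw [List.getLast?_cons_cons]; exact hlast,
          List.isChain_cons_cons.mpr ⟨by omega, hgap⟩⟩, by simp⟩
        intro x hx
        rcases List.mem_cons.mp hx with rfl | hx
        · omega
        · exact hpos x hx
    rcases h with hc | ⟨hevm, hc⟩
    · refine hkey (m - 1) (by omega) (by omega) ?_ hc
      rintro ⟨h1, h2⟩
      rw [Nat.odd_iff] at h1 h2
      omega
    · refine hkey (m - 2) (by omega) (by omega) ?_ hc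
      rintro ⟨h1, _⟩
      exact (Nat.not_odd_iff_even.mpr hevm) h1


open Classical in
noncomputable def T (d m : ℕ) : Finset (List ℕ) :=
  ((Finset.univ : Finset (Fin d → Fin (m + 1))).image
      fun f => List.ofFn fun i => (f i : ℕ)).filter fun l => Cond m l

lemma mem_T {d m : ℕ} {l : List ℕ} : l ∈ T d m ↔ l.length = d ∧ Cond m l := by
  classical
  rw [T, Finset.mem_filter, Finset.mem_image]
  constructor
  · rintro ⟨⟨f, _, rfl⟩, hc⟩
    exact ⟨by simp, hc⟩
  · rintro ⟨hlen, hc⟩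
    refine ⟨?_, hc⟩
    subst hlen
    refine ⟨fun i => ⟨l.get i, Nat.lt_succ_of_le (cond_bound hc _ (List.get_mem l i))⟩,
      Finset.mem_univ _, ?_⟩
    simpa using List.ofFn_get l

open Polynomial in
lemma s_eq (d m : ℕ) : s d m = ∑ l ∈ T d m, (X : Polynomial ℤ) ^ l.sum := by
  classical
  have h1 : s d m = ∑ f : Fin d → Fin (m + 1),
      if Cond m (List.ofFn fun i => (f i : ℕ))
      then (X : Polynomial ℤ) ^ (List.ofFn fun i => (f i : ℕ)).sum else 0 := by
    rw [s]
    apply Finset.sum_congr rfl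
    intro f _
    congr 1
  rw [h1, ← Finset.sum_filter, T, Finset.filter_image,
    Finset.sum_image (by
      intro f _ g _ h
      have := List.ofFn_injective h
      funext i
      exact Fin.val_injective (congrFun this i))]

open Polynomial

lemma s_zero (m : ℕ) : s 0 m = 0 := by
  rw [s_eq]
  have : T 0 m = ∅ := by
    ext l
    simp only [mem_T, Finset.notMem_empty, iff_false, not_and]
    intro hlen hc
    rw [List.length_eq_zero_iff] at hlen
    exact hc.1.1.1 hlen
  simp [this]

lemma s_one_right (d : ℕ) : s d 1 = 0 := by
  rw [s_eq]
  have : T d 1 = ∅ := by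
    ext l
    simp only [mem_T, Finset.notMem_empty, iff_false, not_and]
    exact fun _ hc => not_cond_one hc
  simp [this]

lemma s_two (d : ℕ) : s d 2 = if d = 1 then (X : Polynomial ℤ) ^ 2 else 0 := by
  rw [s_eq]
  rcases eq_or_ne d 1 with rfl | hd
  · have : T 1 2 = {[2]} := by
      ext l
      simp only [mem_T, cond_two, Finset.mem_singleton]
      constructor
      · rintro ⟨_, rfl⟩; rfl
      · rintro rfl; exact ⟨rfl, rfl⟩
    rw [this]
    simp
  · have : T d 2 = ∅ := by
      ext l
      simp only [mem_T, cond_two, Finset.notMem_empty, iff_false, not_and]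
      rintro hlen rfl
      exact hd (by simpa using hlen.symm)
    simp [this, hd]

lemma T_succ {m : ℕ} (hm : 3 ≤ m) (d : ℕ) :
    T (d + 1) m = (T d (m - 1) ∪ if Even m then T d (m - 2) else ∅).image (m :: ·) := by
  classical
  ext l
  constructor
  · intro hl
    obtain ⟨hlen, hc⟩ := mem_T.mp hl
    obtain ⟨l', rfl, h⟩ := (cond_cons hm).mp hc
    refine Finset.mem_image.mpr ⟨l', Finset.mem_union.mpr ?_, rfl⟩
    have hlen' : l'.length = d := by simpa using hlen
    rcases h with h | ⟨he, h⟩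
    · exact Or.inl (mem_T.mpr ⟨hlen', h⟩)
    · exact Or.inr (by rw [if_pos he]; exact mem_T.mpr ⟨hlen', h⟩)
  · intro hl
    obtain ⟨l', hl', rfl⟩ := Finset.mem_image.mp hl
    rw [Finset.mem_union] at hl'
    have : l'.length = d ∧ (Cond (m - 1) l' ∨ Even m ∧ Cond (m - 2) l') := by
      rcases hl' with h | h
      · exact ⟨(mem_T.mp h).1, Or.inl (mem_T.mp h).2⟩
      · by_cases he : Even m
        · rw [if_pos he] at h
          exact ⟨(mem_T.mp h).1, Or.inr ⟨he, (mem_T.mp h).2⟩⟩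
        · rw [if_neg he] at h
          exact absurd h (Finset.notMem_empty _)
    exact mem_T.mpr ⟨by simp [this.1], (cond_cons hm).mpr ⟨l', rfl, this.2⟩⟩

lemma s_succ {m : ℕ} (hm : 3 ≤ m) (d : ℕ) :
    s (d + 1) m = (X : Polynomial ℤ) ^ m *
      (s d (m - 1) + if Even m then s d (m - 2) else 0) := by
  classical
  rw [s_eq, T_succ hm d, Finset.sum_image (by intro a _ b _ h; injection h)]
  have hsum : ∀ l' : List ℕ, (X : Polynomial ℤ) ^ (m :: l').sum =
      (X : Polynomial ℤ) ^ m * (X : Polynomial ℤ) ^ l'.sum := by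
    intro l'; rw [List.sum_cons, pow_add]
  rw [Finset.sum_congr rfl fun l' _ => hsum l', ← Finset.mul_sum]
  congr 1
  have hdisj : Disjoint (T d (m - 1)) (if Even m then T d (m - 2) else ∅) := by
    by_cases he : Even m
    · rw [if_pos he, Finset.disjoint_left]
      intro l h1 h2
      have e1 := (mem_T.mp h1).2.2
      have e2 := (mem_T.mp h2).2.2
      rw [e1] at e2
      have : m - 1 = m - 2 := by simpa using e2
      omega
    · rw [if_neg he]; exact Finset.disjoint_empty_right _
  rw [Finset.sum_union hdisj, ← s_eq]
  congr 1
  by_cases he : Even m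
  · rw [if_pos he, if_pos he, ← s_eq]
  · rw [if_neg he, if_neg he, Finset.sum_empty]

noncomputable def P (j : ℕ) : Polynomial ℤ := ∏ i ∈ Finset.Icc 1 j, (1 - (X : Polynomial ℤ) ^ (2 * i))

noncomputable def E (n k : ℕ) : Polynomial ℤ :=
  ∑ S ∈ (Finset.Icc 1 n).powersetCard k, (X : Polynomial ℤ) ^ (2 * ∑ i ∈ S, i)

lemma P_zero : P 0 = 1 := by simp [P]

lemma P_succ (j : ℕ) : P (j + 1) = P j * (1 - (X : Polynomial ℤ) ^ (2 * (j + 1))) := by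
  rw [P, P, Finset.prod_Icc_succ_top (by omega)]

lemma E_zero (n : ℕ) : E n 0 = 1 := by simp [E]

lemma E_of_lt {n k : ℕ} (h : n < k) : E n k = 0 := by
  rw [E, Finset.powersetCard_eq_empty.mpr (by simp [Nat.card_Icc]; omega), Finset.sum_empty]

lemma E_succ (n k : ℕ) : E (n + 1) (k + 1) = E n (k + 1) + (X : Polynomial ℤ) ^ (2 * (n + 1)) * E n k := by
  classical
  have hins : Finset.Icc 1 (n + 1) = insert (n + 1) (Finset.Icc 1 n) := by
    ext x; simp [Finset.mem_Icc]; omega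
  have hnot : (n + 1) ∉ Finset.Icc 1 n := by simp
  have hdisj : Disjoint ((Finset.Icc 1 n).powersetCard (k + 1))
      (((Finset.Icc 1 n).powersetCard k).image (insert (n + 1))) := by
    rw [Finset.disjoint_right]
    intro S hS hS'
    simp only [Finset.mem_image] at hS
    obtain ⟨A, hA, rfl⟩ := hS
    rw [Finset.mem_powersetCard] at hS'
    exact hnot (hS'.1 (Finset.mem_insert_self _ _))
  rw [E, hins, Finset.powersetCard_succ_insert hnot, Finset.sum_union hdisj,
    Finset.sum_image (by
      intro A hA B hB h
      rw [Finset.mem_coe, Finset.mem_powersetCard] at hA hB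
      have hA' : (n+1) ∉ A := fun hc => hnot (hA.1 hc)
      have hB' : (n+1) ∉ B := fun hc => hnot (hB.1 hc)
      rw [← Finset.erase_insert hA', ← Finset.erase_insert hB', h])]
  congr 1
  simp only [E, Finset.mul_sum]
  apply Finset.sum_congr rfl
  intro S hS
  rw [Finset.mem_powersetCard] at hS
  have : (n+1) ∉ S := fun hc => hnot (hS.1 hc)
  rw [Finset.sum_insert this, ← pow_add]

lemma gauss : ∀ n k : ℕ, k ≤ n → E n k * (P k * P (n - k)) = (X : Polynomial ℤ) ^ (k * (k + 1)) * P n := by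
  intro n
  induction n with
  | zero =>
    intro k hk
    interval_cases k
    simp [E_zero, P_zero]
  | succ n ih =>
    intro k hk
    match k with
    | 0 => simp [E_zero, P_zero]
    | k + 1 =>
      rcases eq_or_lt_of_le hk with he | hlt
      · have hkn : k = n := by omega
        subst hkn
        have h := ih k le_rfl
        rw [Nat.sub_self, P_zero, mul_one] at h
        rw [E_succ, E_of_lt (Nat.lt_succ_self k), zero_add, Nat.sub_self, P_zero, mul_one,
          P_succ k]
        linear_combination ((X : Polynomial ℤ) ^ (2 * (k + 1)) * (1 - (X : Polynomial ℤ) ^ (2 * (k + 1)))) * h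
      · obtain ⟨t, rfl⟩ := Nat.exists_eq_add_of_le (by omega : k + 1 ≤ n)
        have h1 := ih (k + 1) (by omega)
        have h2 := ih k (by omega)
        have e1 : k + 1 + t - (k + 1) = t := by omega
        have e2 : k + 1 + t - k = t + 1 := by omega
        have e3 : k + 1 + t + 1 - (k + 1) = t + 1 := by omega
        rw [e1, P_succ k] at h1
        rw [e2, P_succ t] at h2
        rw [e3, E_succ (k + 1 + t) k, P_succ t, P_succ k, P_succ (k + 1 + t)]
        linear_combination (1 - (X : Polynomial ℤ) ^ (2 * (t + 1))) * h1 +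
          ((X : Polynomial ℤ) ^ (2 * (k + 1 + t + 1)) * (1 - (X : Polynomial ℤ) ^ (2 * (k + 1)))) * h2

lemma s_odd_succ {n : ℕ} (hn : 1 ≤ n) (d : ℕ) :
    s (d + 1) (2 * n + 1) = (X : Polynomial ℤ) ^ (2 * n + 1) * s d (2 * n) := by
  have h := s_succ (m := 2 * n + 1) (by omega) d
  rw [h, if_neg (by rw [Nat.even_iff]; omega), add_zero,
    show 2 * n + 1 - 1 = 2 * n from by omega]

lemma s_even : ∀ n : ℕ, 1 ≤ n → ∀ d : ℕ,
    s d (2 * n) = if n ≤ d then (X : Polynomial ℤ) ^ (n * n + n + (d - n)) * E (n - 1) (d - n) else 0 := by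
  intro n
  induction n with
  | zero => omega
  | succ n ih =>
    intro _ d
    rcases Nat.eq_zero_or_pos n with rfl | hn
    · -- base: m = 2
      rw [show 2 * 1 = 2 from rfl, s_two]
      match d with
      | 0 => simp
      | 1 => simp [E_zero]
      | (e + 2) =>
        rw [if_neg (by omega), if_pos (by omega),
          show e + 2 - 1 = e + 1 from by omega, E_of_lt (by omega), mul_zero]
    · -- step: n = p + 1
      obtain ⟨p, rfl⟩ := Nat.exists_eq_succ_of_ne_zero (by omega : n ≠ 0)
      simp only [Nat.succ_eq_add_one] at ih ⊢
      match d with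
      | 0 => rw [s_zero, if_neg (by omega)]
      | (e + 1) =>
        have hrec := s_succ (m := 2 * (p + 1 + 1)) (by omega) e
        rw [if_pos (even_two_mul _), show 2 * (p + 1 + 1) - 1 = 2 * (p + 1) + 1 from by omega,
          show 2 * (p + 1 + 1) - 2 = 2 * (p + 1) from by omega] at hrec
        rw [hrec]
        match e with
        | 0 =>
          rw [s_zero, s_zero, if_neg (by omega)]
          ring
        | (g + 1) =>
          rw [s_odd_succ (by omega) g, ih (by omega) g, ih (by omega) (g + 1),
            show p + 1 + 1 - 1 = p + 1 from by omega,
            show p + 1 - 1 = p from by omega]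
          rcases Nat.lt_or_ge g (p + 1) with hlt | hge
          · rcases Nat.lt_or_ge (g + 1) (p + 1) with hlt2 | hge2
            · rw [if_neg (show ¬ (p + 1 ≤ g) from by omega),
                if_neg (show ¬ (p + 1 ≤ g + 1) from by omega),
                if_neg (show ¬ (p + 1 + 1 ≤ g + 1 + 1) from by omega)]
              ring
            · have hg : g = p := by omega
              subst hg
              rw [if_neg (show ¬ (g + 1 ≤ g) from by omega),
                if_pos (show g + 1 ≤ g + 1 from le_rfl),
                if_pos (show g + 1 + 1 ≤ g + 1 + 1 from le_rfl),
                show g + 1 - (g + 1) = 0 from by omega,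
                show g + 1 + 1 - (g + 1 + 1) = 0 from by omega, E_zero, E_zero]
              ring
          · obtain ⟨k, rfl⟩ := Nat.exists_eq_add_of_le hge
            rw [if_pos (show p + 1 ≤ p + 1 + k from by omega),
              if_pos (show p + 1 ≤ p + 1 + k + 1 from by omega),
              if_pos (show p + 1 + 1 ≤ p + 1 + k + 1 + 1 from by omega),
              show p + 1 + k - (p + 1) = k from by omega,
              show p + 1 + k + 1 - (p + 1) = k + 1 from by omega,
              show p + 1 + k + 1 + 1 - (p + 1 + 1) = k + 1 from by omega,
              E_succ p k]
            ring

open Polynomial in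
/-- `s(d, 2n+1) = 0` unless `n+1 ≤ d ≤ 2n`, and for `n+1 ≤ d ≤ 2n` one has, in `ℤ[q]`:
`s(d,2n+1)·∏_{i=1}^{2n−d}(1−q^{2i})·∏_{i=1}^{d−n−1}(1−q^{2i})
  = q^{2n²−2dn+d²+3n}·∏_{i=1}^{n−1}(1−q^{2i})`,
i.e. `s(d,2n+1)` equals `q^{2n²−2dn+d²+3n}` times the Gaussian binomial
coefficient `[n−1 choose 2n−d]` in the variable `q²`. -/
theorem s_odd_closed_form :
    (∀ d n : ℕ, ¬(n + 1 ≤ d ∧ d ≤ 2 * n) → s d (2 * n + 1) = 0) ∧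
    (∀ d n : ℕ, n + 1 ≤ d → d ≤ 2 * n →
      s d (2 * n + 1) * (∏ i ∈ Finset.Icc 1 (2 * n - d), (1 - (X : Polynomial ℤ) ^ (2 * i))) *
          (∏ i ∈ Finset.Icc 1 (d - n - 1), (1 - (X : Polynomial ℤ) ^ (2 * i))) =
        X ^ (2 * n ^ 2 + d ^ 2 + 3 * n - 2 * d * n) *
          ∏ i ∈ Finset.Icc 1 (n - 1), (1 - (X : Polynomial ℤ) ^ (2 * i))) := by
  constructor
  · intro d n h
    rcases n with _ | n
    · exact s_one_right d
    rcases d with _ | e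
    · exact s_zero _
    rw [s_odd_succ (by omega) e, s_even (n + 1) (by omega) e]
    rcases Nat.lt_or_ge e (n + 1) with hlt | hge
    · rw [if_neg (by omega), mul_zero]
    · rw [if_pos hge, E_of_lt (show n + 1 - 1 < e - (n + 1) from by omega), mul_zero, mul_zero]
  · intro d n hd1 hd2
    have hn : 1 ≤ n := by omega
    obtain ⟨k, rfl⟩ := Nat.exists_eq_add_of_le hd1
    have hk : k ≤ n - 1 := by omega
    rw [show n + 1 + k = (n + k) + 1 from by omega]
    rw [s_odd_succ hn (n + k), s_even n hn (n + k), if_pos (by omega),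
      show n + k - n = k from by omega,
      show 2 * n - (n + k + 1) = n - 1 - k from by omega,
      show n + k + 1 - n - 1 = k from by omega]
    have hexp : 2 * n ^ 2 + (n + k + 1) ^ 2 + 3 * n - 2 * (n + k + 1) * n
        = (2 * n + 1) + (n * n + n + k) + k * (k + 1) := by
      have h1 : 2 * n ^ 2 + (n + k + 1) ^ 2 + 3 * n
          = 2 * (n + k + 1) * n + ((2 * n + 1) + (n * n + n + k) + k * (k + 1)) := by ring
      rw [h1, Nat.add_sub_cancel_left]
    rw [hexp]
    have hg := gauss (n - 1) k hk
    change (X : Polynomial ℤ) ^ (2 * n + 1) * ((X : Polynomial ℤ) ^ (n * n + n + k) * E (n - 1) k) *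
        P (n - 1 - k) * P k =
      (X : Polynomial ℤ) ^ ((2 * n + 1) + (n * n + n + k) + k * (k + 1)) * P (n - 1)
    linear_combination ((X : Polynomial ℤ) ^ (2 * n + 1) * (X : Polynomial ℤ) ^ (n * n + n + k)) * hg
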